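/- The signatures of naive, stable and stage semantics admit the following characterizations: Σ_naive = {𝕊 an extension-set | 𝕊 ≠ ∅ and 𝕊 = 𝕊⁺}; Σ_stb = {𝕊 an extension-set | 𝕊 ⊆ 𝕊⁺}; Σ_stage = {𝕊 an extension-set | 𝕊 ≠ ∅ and 𝕊 ⊆ 𝕊⁺}. -/

import Mathlib

structure AF where
  A : Finset ℕ
  R : Set (ℕ × ℕ)
  R_sub : ∀ p ∈ R, p.1 ∈ A ∧ p.2 ∈ A

namespace AF

def cf (F : AF) : Set (Set ℕ) :=
  {S | S ⊆ ↑F.A ∧ ∀ a ∈ S, ∀ b ∈ S, (a, b) ∉ F.R}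

def defends (F : AF) (S : Set ℕ) (a : ℕ) : Prop :=
  ∀ b, (b, a) ∈ F.R → ∃ s ∈ S, (s, b) ∈ F.R

def adm (F : AF) : Set (Set ℕ) :=
  {S | S ∈ F.cf ∧ ∀ a ∈ S, F.defends S a}

def rng (F : AF) (S : Set ℕ) : Set ℕ :=
  S ∪ {b | ∃ s ∈ S, (s, b) ∈ F.R}

def naive (F : AF) : Set (Set ℕ) :=
  {S | S ∈ F.cf ∧ ∀ T ∈ F.cf, S ⊆ T → S = T}

def stb (F : AF) : Set (Set ℕ) :=
  {S | S ∈ F.cf ∧ ∀ a ∈ F.A, a ∉ S → ∃ s ∈ S, (s, a) ∈ F.R}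

def pref (F : AF) : Set (Set ℕ) :=
  {S | S ∈ F.adm ∧ ∀ T ∈ F.adm, S ⊆ T → S = T}

def stage (F : AF) : Set (Set ℕ) :=
  {S | S ∈ F.cf ∧ ¬ ∃ T ∈ F.cf, F.rng S ⊂ F.rng T}

def sem (F : AF) : Set (Set ℕ) :=
  {S | S ∈ F.adm ∧ ¬ ∃ T ∈ F.adm, F.rng S ⊂ F.rng T}

end AF

abbrev Semantics := AF → Set (Set ℕ)

def StandardSemantics : Set Semantics :=
  {AF.naive, AF.stb, AF.stage, AF.pref, AF.sem}

def AFCompact (σ : Semantics) (F : AF) : Prop :=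
  ∀ a ∈ F.A, ∃ S ∈ σ F, a ∈ S

def CAF (σ : Semantics) : Set AF := {F | AFCompact σ F}

def ArgS (𝕊 : Set (Set ℕ)) : Set ℕ := ⋃₀ 𝕊

def PairsS (𝕊 : Set (Set ℕ)) : Set (ℕ × ℕ) :=
  {p | ∃ S ∈ 𝕊, p.1 ∈ S ∧ p.2 ∈ S}

def IsExtensionSet (𝕊 : Set (Set ℕ)) : Prop := (ArgS 𝕊).Finite

def AFStep (F : AF) (a b : ℕ) : Prop := (a, b) ∈ F.R ∨ (b, a) ∈ F.R

def AFConnected (F : AF) : Prop :=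
  ∀ a ∈ F.A, ∀ b ∈ F.A, Relation.ReflTransGen (AFStep F) a b

def sameComp (F : AF) (a b : ℕ) : Prop := Relation.ReflTransGen (AFStep F) a b

def comps (F : AF) : Set (Set ℕ) :=
  {K | ∃ a ∈ F.A, K = {b ∈ (↑F.A : Set ℕ) | sameComp F a b}}

def nopairs (𝕊 : Set (Set ℕ)) (a b : ℕ) : Prop :=
  a ∈ ArgS 𝕊 ∧ b ∈ ArgS 𝕊 ∧ (a, b) ∉ PairsS 𝕊

def compsS (𝕊 : Set (Set ℕ)) : Set (Set ℕ) :=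
  {K | ∃ a ∈ ArgS 𝕊, K = {b ∈ ArgS 𝕊 | Relation.ReflTransGen (nopairs 𝕊) a b}}

noncomputable def sigmaMax (σ : Semantics) (n : ℕ) : ℕ :=
  sSup {k | ∃ F : AF, F.A.card = n ∧ (σ F).ncard = k}

noncomputable def sigmaMaxCon (σ : Semantics) (n : ℕ) : ℕ :=
  sSup {k | ∃ F : AF, F.A.card = n ∧ AFConnected F ∧ (σ F).ncard = k}

noncomputable def sigmaMax2 (σ : Semantics) (n : ℕ) : ℕ :=
  sSup ({k | ∃ F : AF, F.A.card = n ∧ (σ F).ncard = k} \ {sigmaMax σ n})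

def cfSet (𝕊 : Set (Set ℕ)) : Set (Set ℕ) :=
  {S | S ⊆ ArgS 𝕊 ∧ ∀ a ∈ S, ∀ b ∈ S, (a, b) ∈ PairsS 𝕊}

def plusSet (𝕊 : Set (Set ℕ)) : Set (Set ℕ) :=
  {S | S ∈ cfSet 𝕊 ∧ ∀ T ∈ cfSet 𝕊, S ⊆ T → S = T}

def minusSet (𝕊 : Set (Set ℕ)) : Set (Set ℕ) := plusSet 𝕊 \ 𝕊

def Sig (σ : Semantics) : Set (Set (Set ℕ)) := {𝕊 | ∃ F : AF, σ F = 𝕊}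

def cSig (σ : Semantics) : Set (Set (Set ℕ)) :=
  {𝕊 | ∃ F : AF, AFCompact σ F ∧ σ F = 𝕊}

def Pcon (σ : Semantics) (n : ℕ) : Set ℕ :=
  {k | ∃ F : AF, AFCompact σ F ∧ AFConnected F ∧ F.A.card = n ∧ (σ F).ncard = k}

open Classical in
noncomputable def restrictAF (F : AF) (K : Set ℕ) : AF where
  A := F.A.filter (fun a => a ∈ K)
  R := {p | p ∈ F.R ∧ p.1 ∈ K ∧ p.2 ∈ K}
  R_sub := fun p hp => by
    have h := F.R_sub p hp.1
    simp only [Finset.mem_filter]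
    exact ⟨⟨h.1, hp.2.1⟩, ⟨h.2, hp.2.2⟩⟩

def IsExclusionMapping (𝕊 : Set (Set ℕ)) (Rm : Set (ℕ × ℕ)) : Prop :=
  ∃ f : Set ℕ → ℕ,
    (∀ S ∈ minusSet 𝕊, f S ∈ ArgS 𝕊 ∧ f S ∉ S) ∧
    Rm = {p | ∃ S ∈ minusSet 𝕊, p.1 ∈ S ∧ p.2 = f S ∧ p ∉ PairsS 𝕊}

def Independent (𝕊 : Set (Set ℕ)) : Prop :=
  ∃ Rm : Set (ℕ × ℕ), IsExclusionMapping 𝕊 Rm ∧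
    (∀ a b, (a, b) ∈ Rm → (b, a) ∈ Rm → a = b) ∧
    ∀ S ∈ 𝕊, ∀ a ∈ ArgS 𝕊 \ S, ∃ s ∈ S, (s, a) ∉ Rm ∪ PairsS 𝕊

def ConflictExplicit (σ : Semantics) (F : AF) : Prop :=
  ∀ a ∈ F.A, ∀ b ∈ F.A, (a, b) ∉ PairsS (σ F) → (a, b) ∈ F.R ∨ (b, a) ∈ F.R

noncomputable def canonicalCF (𝕊 : Set (Set ℕ)) (h : IsExtensionSet 𝕊) : AF where
  A := h.toFinset
  R := {p | p.1 ∈ ArgS 𝕊 ∧ p.2 ∈ ArgS 𝕊 ∧ p ∉ PairsS 𝕊}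
  R_sub := fun p hp => by
    exact ⟨(Set.Finite.mem_toFinset (hs := h)).2 hp.1, (Set.Finite.mem_toFinset (hs := h)).2 hp.2.1⟩
section Aux
open Classical

lemma pairsS_symm {𝕊 : Set (Set ℕ)} {a b : ℕ} (h : (a, b) ∈ PairsS 𝕊) : (b, a) ∈ PairsS 𝕊 := by
  obtain ⟨S, hS, ha, hb⟩ := h; exact ⟨S, hS, hb, ha⟩

lemma cf_finite (F : AF) : F.cf.Finite :=
  (F.A.finite_toSet.finite_subsets).subset fun _ hS => hS.1

lemma empty_cf (F : AF) : ∅ ∈ F.cf := ⟨Set.empty_subset _, by simp⟩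

lemma exists_naive_superset (F : AF) {S : Set ℕ} (hS : S ∈ F.cf) : ∃ T ∈ F.naive, S ⊆ T := by
  obtain ⟨T, ⟨hT, hST⟩, hmax⟩ := Set.Finite.exists_maximalFor id {T | T ∈ F.cf ∧ S ⊆ T}
    ((cf_finite F).subset fun _ hT => hT.1) ⟨S, hS, subset_rfl⟩
  exact ⟨T, ⟨hT, fun U hU hTU => Set.Subset.antisymm hTU (hmax ⟨hU, hST.trans hTU⟩ hTU)⟩, hST⟩

lemma cfSet_naive (F : AF) : cfSet F.naive = F.cf := by
  ext S
  constructor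
  · rintro ⟨hsub, hp⟩
    refine ⟨fun a ha => ?_, fun a ha b hb hab => ?_⟩
    · obtain ⟨T, hT, haT⟩ := hsub ha
      exact hT.1.1 haT
    · obtain ⟨T, hT, haT, hbT⟩ := hp a ha b hb
      exact hT.1.2 a haT b hbT hab
  · intro hS
    have key : ∀ a ∈ S, ∀ b ∈ S, ∃ T ∈ F.naive, a ∈ T ∧ b ∈ T := by
      intro a ha b hb
      have hcf : ({a, b} : Set ℕ) ∈ F.cf := by
        constructor
        · intro x hx
          rcases hx with rfl | hx
          · exact hS.1 ha
          · rw [Set.mem_singleton_iff] at hx; subst hx; exact hS.1 hb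
        · intro x hx y hy
          have hx' : x ∈ S := by
            rcases hx with rfl | hx
            · exact ha
            · rw [Set.mem_singleton_iff] at hx; subst hx; exact hb
          have hy' : y ∈ S := by
            rcases hy with rfl | hy
            · exact ha
            · rw [Set.mem_singleton_iff] at hy; subst hy; exact hb
          exact hS.2 x hx' y hy'
      obtain ⟨T, hT, hsub⟩ := exists_naive_superset F hcf
      exact ⟨T, hT, hsub (by simp), hsub (by simp)⟩
    refine ⟨fun a ha => ?_, fun a ha b hb => ?_⟩
    · obtain ⟨T, hT, haT, _⟩ := key a ha a ha
      exact ⟨T, hT, haT⟩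
    · exact key a ha b hb

lemma naive_eq_plusSet (F : AF) : F.naive = plusSet F.naive := by
  unfold plusSet
  rw [cfSet_naive]
  rfl

lemma naive_in_char (F : AF) :
    IsExtensionSet F.naive ∧ F.naive ≠ ∅ ∧ F.naive = plusSet F.naive := by
  refine ⟨?_, ?_, naive_eq_plusSet F⟩
  · apply F.A.finite_toSet.subset
    rintro a ⟨T, hT, haT⟩
    exact hT.1.1 haT
  · obtain ⟨T, hT, -⟩ := exists_naive_superset F (empty_cf F)
    intro hempty; rw [hempty] at hT; exact hT

lemma cf_canonicalCF (𝕊 : Set (Set ℕ)) (h : IsExtensionSet 𝕊) :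
    (canonicalCF 𝕊 h).cf = cfSet 𝕊 := by
  ext S
  constructor
  · rintro ⟨hsub, hp⟩
    have hsub' : S ⊆ ArgS 𝕊 := by
      intro a ha
      have := hsub ha
      exact (Set.Finite.mem_toFinset (hs := h)).1 this
    refine ⟨hsub', fun a ha b hb => ?_⟩
    by_contra hab
    exact hp a ha b hb ⟨hsub' ha, hsub' hb, hab⟩
  · rintro ⟨hsub, hp⟩
    refine ⟨fun a ha => ?_, fun a ha b hb hab => hab.2.2 (hp a ha b hb)⟩
    simp only [canonicalCF, Finset.mem_coe, Set.Finite.mem_toFinset]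
    exact (Set.Finite.mem_toFinset (hs := h)).2 (hsub ha)

lemma naive_canonicalCF (𝕊 : Set (Set ℕ)) (h : IsExtensionSet 𝕊) :
    (canonicalCF 𝕊 h).naive = plusSet 𝕊 := by
  unfold AF.naive plusSet
  rw [cf_canonicalCF]

end Aux
section Aux2
open Classical

lemma stb_in_char (F : AF) : IsExtensionSet F.stb ∧ F.stb ⊆ plusSet F.stb := by
  constructor
  · apply F.A.finite_toSet.subset
    rintro a ⟨T, hT, haT⟩
    exact hT.1.1 haT
  · intro S hS
    have hcfS : S ∈ cfSet F.stb := ⟨fun a ha => ⟨S, hS, ha⟩, fun a ha b hb => ⟨S, hS, ha, hb⟩⟩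
    refine ⟨hcfS, fun T hT hST => Set.Subset.antisymm hST fun x hx => ?_⟩
    by_contra hxS
    have hxA : x ∈ F.A := by
      obtain ⟨U, hU, hxU⟩ := hT.1 hx
      exact hU.1.1 hxU
    obtain ⟨s, hs, hR⟩ := hS.2 x hxA hxS
    obtain ⟨U, hU, hsU, hxU⟩ := hT.2 s (hST hs) x hx
    exact hU.1.2 s hsU x hxU hR

lemma rng_subset_A (F : AF) {S : Set ℕ} (hS : S ∈ F.cf) : F.rng S ⊆ ↑F.A := by
  rintro b (hb | ⟨s, _, hR⟩)
  · exact hS.1 hb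
  · exact (F.R_sub _ hR).2

lemma rng_mono (F : AF) {S T : Set ℕ} (h : S ⊆ T) : F.rng S ⊆ F.rng T := by
  rintro b (hb | ⟨s, hs, hR⟩)
  · exact Or.inl (h hb)
  · exact Or.inr ⟨s, h hs, hR⟩

lemma rng_stb (F : AF) {S : Set ℕ} (hS : S ∈ F.stb) : F.rng S = ↑F.A := by
  apply Set.Subset.antisymm (rng_subset_A F hS.1)
  intro a ha
  by_cases haS : a ∈ S
  · exact Or.inl haS
  · obtain ⟨s, hs, hR⟩ := hS.2 a ha haS
    exact Or.inr ⟨s, hs, hR⟩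

lemma stb_subset_stage (F : AF) : F.stb ⊆ F.stage := by
  intro S hS
  refine ⟨hS.1, ?_⟩
  rintro ⟨T, hT, hss⟩
  exact hss.2 ((rng_subset_A F hT).trans (rng_stb F hS).symm.subset)

lemma stage_eq_stb (F : AF) (hne : F.stb.Nonempty) : F.stage = F.stb := by
  obtain ⟨E, hE⟩ := hne
  apply Set.Subset.antisymm _ (stb_subset_stage F)
  intro S hS
  have hrng : F.rng S = ↑F.A := by
    by_contra hne'
    exact hS.2 ⟨E, hE.1, (rng_stb F hE) ▸
      (Set.ssubset_iff_subset_ne.mpr ⟨rng_subset_A F hS.1, hne'⟩)⟩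
  refine ⟨hS.1, fun a ha haS => ?_⟩
  have : a ∈ F.rng S := hrng ▸ ha
  rcases this with h | ⟨s, hs, hR⟩
  · exact absurd h haS
  · exact ⟨s, hs, hR⟩

lemma stage_nonempty (F : AF) : F.stage.Nonempty := by
  obtain ⟨S, hS, hmax⟩ := Set.Finite.exists_maximalFor F.rng F.cf (cf_finite F) ⟨∅, empty_cf F⟩
  refine ⟨S, hS, ?_⟩
  rintro ⟨T, hT, hss⟩
  exact hss.2 (hmax hT hss.1)

lemma stage_in_char (F : AF) :
    IsExtensionSet F.stage ∧ F.stage ≠ ∅ ∧ F.stage ⊆ plusSet F.stage := by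
  refine ⟨?_, ?_, ?_⟩
  · apply F.A.finite_toSet.subset
    rintro a ⟨T, hT, haT⟩
    exact hT.1.1 haT
  · exact Set.nonempty_iff_ne_empty.mp (stage_nonempty F)
  · intro S hS
    have hcfS : S ∈ cfSet F.stage := ⟨fun a ha => ⟨S, hS, ha⟩, fun a ha b hb => ⟨S, hS, ha, hb⟩⟩
    refine ⟨hcfS, fun T hT hST => Set.Subset.antisymm hST fun x hx => ?_⟩
    have hTcf : T ∈ F.cf := by
      refine ⟨fun a ha => ?_, fun a ha b hb hab => ?_⟩
      · obtain ⟨U, hU, haU⟩ := hT.1 ha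
        exact hU.1.1 haU
      · obtain ⟨U, hU, haU, hbU⟩ := hT.2 a ha b hb
        exact hU.1.2 a haU b hbU hab
    have hrng : F.rng S = F.rng T := by
      by_contra hne'
      exact hS.2 ⟨T, hTcf, Set.ssubset_iff_subset_ne.mpr ⟨rng_mono F hST, hne'⟩⟩
    have : x ∈ F.rng S := hrng ▸ Or.inl hx
    rcases this with h | ⟨s, hs, hR⟩
    · exact h
    · exact absurd hR (hTcf.2 s (hST hs) x hx)

end Aux2
section Aux3
open Classical

lemma cfSet_subset_arg {𝕊 : Set (Set ℕ)} {S : Set ℕ} (h : S ∈ cfSet 𝕊) : S ⊆ ArgS 𝕊 := h.1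

lemma minus_finite (𝕊 : Set (Set ℕ)) (h : IsExtensionSet 𝕊) : (minusSet 𝕊).Finite :=
  (h.finite_subsets).subset fun S hS => hS.1.1.1

noncomputable def gFun (𝕊 : Set (Set ℕ)) (h : IsExtensionSet 𝕊) : Set ℕ → ℕ :=
  fun S => (h.toFinset.sup id + 1) + (minus_finite 𝕊 h).toFinset.toList.idxOf S

lemma gFun_not_arg (𝕊 : Set (Set ℕ)) (h : IsExtensionSet 𝕊) (S : Set ℕ) :
    gFun 𝕊 h S ∉ ArgS 𝕊 := by
  intro hmem
  have h1 : gFun 𝕊 h S ≤ h.toFinset.sup id := Finset.le_sup (f := id) (h.mem_toFinset.mpr hmem)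
  have h2 : h.toFinset.sup id + 1 ≤ gFun 𝕊 h S := Nat.le_add_right _ _
  omega

lemma gFun_inj (𝕊 : Set (Set ℕ)) (h : IsExtensionSet 𝕊) {S T : Set ℕ}
    (hS : S ∈ minusSet 𝕊) (hT : T ∈ minusSet 𝕊) (heq : gFun 𝕊 h S = gFun 𝕊 h T) : S = T := by
  have hS' : S ∈ (minus_finite 𝕊 h).toFinset.toList := by
    rw [Finset.mem_toList, Set.Finite.mem_toFinset]; exact hS
  have hT' : T ∈ (minus_finite 𝕊 h).toFinset.toList := by
    rw [Finset.mem_toList, Set.Finite.mem_toFinset]; exact hT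
  have : (minus_finite 𝕊 h).toFinset.toList.idxOf S =
      (minus_finite 𝕊 h).toFinset.toList.idxOf T := by
    unfold gFun at heq; omega
  exact (List.idxOf_inj hS' (y := T)).mp this

noncomputable def canonicalStb (𝕊 : Set (Set ℕ)) (h : IsExtensionSet 𝕊) : AF where
  A := h.toFinset ∪ (minus_finite 𝕊 h).toFinset.image (gFun 𝕊 h)
  R := {p | (p.1 ∈ ArgS 𝕊 ∧ p.2 ∈ ArgS 𝕊 ∧ p ∉ PairsS 𝕊) ∨
        ∃ S ∈ minusSet 𝕊, p.2 = gFun 𝕊 h S ∧ (p.1 = gFun 𝕊 h S ∨ (p.1 ∈ ArgS 𝕊 ∧ p.1 ∉ S))}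
  R_sub := fun p hp => by
    rcases hp with ⟨h1, h2, _⟩ | ⟨S, hS, h2, h1⟩
    · exact ⟨Finset.mem_union_left _ (h.mem_toFinset.mpr h1),
        Finset.mem_union_left _ (h.mem_toFinset.mpr h2)⟩
    · have hg : gFun 𝕊 h S ∈ (minus_finite 𝕊 h).toFinset.image (gFun 𝕊 h) :=
        Finset.mem_image_of_mem _ ((minus_finite 𝕊 h).mem_toFinset.mpr hS)
      refine ⟨?_, h2 ▸ Finset.mem_union_right _ hg⟩
      rcases h1 with h1eq | ⟨h1, _⟩
      · exact h1eq ▸ Finset.mem_union_right _ hg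
      · exact Finset.mem_union_left _ (h.mem_toFinset.mpr h1)

lemma mem_canonicalStb_A {𝕊 : Set (Set ℕ)} {h : IsExtensionSet 𝕊} {a : ℕ} :
    a ∈ (canonicalStb 𝕊 h).A ↔ a ∈ ArgS 𝕊 ∨ ∃ S ∈ minusSet 𝕊, a = gFun 𝕊 h S := by
  simp only [canonicalStb, Finset.mem_union, Set.Finite.mem_toFinset, Finset.mem_image]
  constructor
  · rintro (ha | ⟨S, hS, rfl⟩)
    · exact Or.inl ((Set.Finite.mem_toFinset (hs := h)).1 ha)
    · exact Or.inr ⟨S, hS, rfl⟩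
  · rintro (ha | ⟨S, hS, rfl⟩)
    · exact Or.inl ((Set.Finite.mem_toFinset (hs := h)).2 ha)
    · exact Or.inr ⟨S, hS, rfl⟩

lemma stb_canonicalStb (𝕊 : Set (Set ℕ)) (h : IsExtensionSet 𝕊) (hsub : 𝕊 ⊆ plusSet 𝕊) :
    (canonicalStb 𝕊 h).stb = 𝕊 := by
  set F := canonicalStb 𝕊 h with hF
  have hR : ∀ p : ℕ × ℕ, p ∈ F.R ↔ ((p.1 ∈ ArgS 𝕊 ∧ p.2 ∈ ArgS 𝕊 ∧ p ∉ PairsS 𝕊) ∨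
      ∃ S ∈ minusSet 𝕊, p.2 = gFun 𝕊 h S ∧ (p.1 = gFun 𝕊 h S ∨ (p.1 ∈ ArgS 𝕊 ∧ p.1 ∉ S))) :=
    fun p => Iff.rfl
  ext E
  constructor
  · rintro ⟨⟨hEsub, hEcf⟩, hstb⟩
    -- E ⊆ ArgS 𝕊
    have hEArg : E ⊆ ArgS 𝕊 := by
      intro x hx
      by_contra hxA
      have hxF : x ∈ F.A := hEsub hx
      rcases mem_canonicalStb_A.mp hxF with h1 | ⟨S, hS, rfl⟩
      · exact hxA h1
      · exact hEcf _ hx _ hx (Or.inr ⟨S, hS, rfl, Or.inl rfl⟩)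
    -- E ∈ cfSet 𝕊
    have hEcfS : E ∈ cfSet 𝕊 := by
      refine ⟨hEArg, fun a ha b hb => ?_⟩
      by_contra hab
      exact hEcf a ha b hb (Or.inl ⟨hEArg ha, hEArg hb, hab⟩)
    -- E maximal
    have hEmax : E ∈ plusSet 𝕊 := by
      refine ⟨hEcfS, fun T hT hET => Set.Subset.antisymm hET fun x hx => ?_⟩
      by_contra hxE
      have hxArg : x ∈ ArgS 𝕊 := hT.1 hx
      have hxA : x ∈ F.A := mem_canonicalStb_A.mpr (Or.inl hxArg)
      obtain ⟨s, hs, hRs⟩ := hstb x hxA hxE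
      rcases hRs with ⟨_, _, hnp⟩ | ⟨S, hS, hx2, _⟩
      · exact hnp (hT.2 s (hET hs) x hx)
      · exact gFun_not_arg 𝕊 h S (hx2 ▸ hxArg)
    -- E ∈ 𝕊
    by_contra hE𝕊
    have hEm : E ∈ minusSet 𝕊 := ⟨hEmax, hE𝕊⟩
    have hgA : gFun 𝕊 h E ∈ F.A := mem_canonicalStb_A.mpr (Or.inr ⟨E, hEm, rfl⟩)
    have hgE : gFun 𝕊 h E ∉ E := fun hc => gFun_not_arg 𝕊 h E (hEArg hc)
    obtain ⟨s, hs, hRs⟩ := hstb _ hgA hgE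
    rcases hRs with ⟨_, h2, _⟩ | ⟨S, hS, hgeq, hcase⟩
    · exact gFun_not_arg 𝕊 h E h2
    · have : S = E := gFun_inj 𝕊 h hS hEm hgeq.symm
      subst this
      rcases hcase with rfl | ⟨_, hsS⟩
      · exact gFun_not_arg 𝕊 h S (hEArg hs)
      · exact hsS hs
  · intro hE
    have hEp : E ∈ plusSet 𝕊 := hsub hE
    have hEArg : E ⊆ ArgS 𝕊 := hEp.1.1
    refine ⟨⟨fun a ha => mem_canonicalStb_A.mpr (Or.inl (hEArg ha)), ?_⟩, ?_⟩
    · intro a ha b hb hab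
      rcases hab with ⟨_, _, hnp⟩ | ⟨S, _, hb2, _⟩
      · exact hnp (hEp.1.2 a ha b hb)
      · exact gFun_not_arg 𝕊 h S (hb2 ▸ hEArg hb)
    · intro a haA haE
      rcases mem_canonicalStb_A.mp haA with haArg | ⟨S, hS, rfl⟩
      · -- a is an original argument
        by_contra hno
        push_neg at hno
        have hall : ∀ s ∈ E, (s, a) ∈ PairsS 𝕊 := by
          intro s hs
          by_contra hnp
          exact absurd (Or.inl ⟨hEArg hs, haArg, hnp⟩) (hno s hs)
        have hcf : E ∪ {a} ∈ cfSet 𝕊 := by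
          refine ⟨?_, ?_⟩
          · rintro x (hx | hx)
            · exact hEArg hx
            · exact hx ▸ haArg
          · rintro x (hx | hx) y (hy | hy)
            · exact hEp.1.2 x hx y hy
            · rw [Set.mem_singleton_iff] at hy; subst hy; exact hall x hx
            · rw [Set.mem_singleton_iff] at hx; subst hx; exact pairsS_symm (hall y hy)
            · rw [Set.mem_singleton_iff] at hx hy; subst hx; subst hy
              obtain ⟨U, hU, hxU⟩ := haArg
              exact ⟨U, hU, hxU, hxU⟩
        have := hEp.2 _ hcf Set.subset_union_left
        exact haE (this ▸ Or.inr rfl)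
      · -- a = gFun S for S ∈ minus
        have hSE : S ≠ E := fun hc => hS.2 (hc ▸ hE)
        have : ¬ E ⊆ S := fun hES => hSE (hEp.2 S hS.1.1 hES).symm
        obtain ⟨s, hs, hsS⟩ := Set.not_subset.mp this
        exact ⟨s, hs, Or.inr ⟨S, hS, rfl, Or.inr ⟨hEArg hs, hsS⟩⟩⟩

end Aux3
theorem signature_characterizations :
    Sig AF.naive = {𝕊 | IsExtensionSet 𝕊 ∧ 𝕊 ≠ ∅ ∧ 𝕊 = plusSet 𝕊} ∧
    Sig AF.stb = {𝕊 | IsExtensionSet 𝕊 ∧ 𝕊 ⊆ plusSet 𝕊} ∧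
    Sig AF.stage = {𝕊 | IsExtensionSet 𝕊 ∧ 𝕊 ≠ ∅ ∧ 𝕊 ⊆ plusSet 𝕊} := by
  refine ⟨?_, ?_, ?_⟩
  · ext 𝕊
    constructor
    · rintro ⟨F, rfl⟩
      exact naive_in_char F
    · rintro ⟨h, hne, heq⟩
      exact ⟨canonicalCF 𝕊 h, by rw [naive_canonicalCF, ← heq]⟩
  · ext 𝕊
    constructor
    · rintro ⟨F, rfl⟩
      exact stb_in_char F
    · rintro ⟨h, hsub⟩
      exact ⟨canonicalStb 𝕊 h, stb_canonicalStb 𝕊 h hsub⟩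
  · ext 𝕊
    constructor
    · rintro ⟨F, rfl⟩
      exact stage_in_char F
    · rintro ⟨h, hne, hsub⟩
      refine ⟨canonicalStb 𝕊 h, ?_⟩
      rw [stage_eq_stb _ (by
        rw [stb_canonicalStb 𝕊 h hsub]
        exact Set.nonempty_iff_ne_empty.mpr hne), stb_canonicalStb 𝕊 h hsub]
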